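/- Let M be an n×n Hermitian matrix, and let M(t) = K(exp(tM))⁻¹ · M · K(exp(tM)), where K(g) denotes the unitary Q-factor in the QR-decomposition of g (with positive diagonal R). Then M(t) solves the symmetric Toda lattice equation dM/dt = [M, k(M)], where k(M) is the skew-Hermitian matrix such that M - k(M) is upper triangular with real diagonal (i.e., k(M) has entries k(M)_{ij} = M_{ij} for i > j, -conj(M_{ji}) for i < j, and purely imaginary part of M_{ii} on the diagonal; for real symmetric M, k(M) is the strictly-lower-part minus its transpose). -/

import Mathlib

open Matrix BigOperators

noncomputable section

/-- The skew-Hermitian projection `k(M)`: the unique skew-Hermitian matrix such that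
`M - k(M)` is upper triangular with real diagonal entries. -/
def kProj {n : ℕ} (M : Matrix (Fin n) (Fin n) ℂ) : Matrix (Fin n) (Fin n) ℂ :=
  Matrix.of fun i j =>
    if j < i then M i j
    else if i < j then -(starRingEnd ℂ) (M j i)
    else Complex.I * ((M i i).im : ℂ)

attribute [local instance] Matrix.linftyOpNormedAddCommGroup Matrix.linftyOpNormedRing
  Matrix.linftyOpNormedAlgebra

namespace SymesAux

variable {n : ℕ}

def entryCLM (i j : Fin n) : Matrix (Fin n) (Fin n) ℂ →L[ℝ] ℂ :=
  LinearMap.toContinuousLinearMap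
    { toFun := fun A => A i j
      map_add' := fun _ _ => rfl
      map_smul' := fun _ _ => rfl }

theorem hasDerivAt_entry {f : ℝ → Matrix (Fin n) (Fin n) ℂ} {F : Matrix (Fin n) (Fin n) ℂ}
    {t : ℝ} (h : HasDerivAt f F t) (i j : Fin n) :
    HasDerivAt (fun s => f s i j) (F i j) t :=
  (entryCLM i j).hasFDerivAt.comp_hasDerivAt t h

theorem matrix_eq_sum (A : Matrix (Fin n) (Fin n) ℂ) :
    A = ∑ i : Fin n, ∑ j : Fin n, A i j • Matrix.single i j 1 := by
  ext a b
  simp only [Matrix.sum_apply, Matrix.smul_apply, Matrix.single, Matrix.of_apply,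
    smul_eq_mul, mul_ite, mul_one, mul_zero]
  rw [Finset.sum_eq_single a, Finset.sum_eq_single b] <;>
    simp +contextual [eq_comm]

theorem hasDerivAt_matrix {f : ℝ → Matrix (Fin n) (Fin n) ℂ} {F : Matrix (Fin n) (Fin n) ℂ}
    {t : ℝ} (h : ∀ i j, HasDerivAt (fun s => f s i j) (F i j) t) :
    HasDerivAt f F t := by
  have h2 : HasDerivAt (fun s => ∑ i : Fin n, ∑ j : Fin n, f s i j • Matrix.single i j 1) F t := by
    rw [matrix_eq_sum F]
    exact HasDerivAt.fun_sum fun i _ => HasDerivAt.fun_sum fun j _ => (h i j).smul_const (Matrix.single i j (1 : ℂ))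
  exact h2.congr_of_eventuallyEq (Filter.Eventually.of_forall fun s => matrix_eq_sum (f s))

def ctCLM : Matrix (Fin n) (Fin n) ℂ →L[ℝ] Matrix (Fin n) (Fin n) ℂ :=
  LinearMap.toContinuousLinearMap
    { toFun := fun A => Aᴴ
      map_add' := fun A B => conjTranspose_add A B
      map_smul' := fun r A => by
        ext i j
        simp [Matrix.conjTranspose_apply, Complex.real_smul] }

theorem HasDerivAt.matrixCT {f : ℝ → Matrix (Fin n) (Fin n) ℂ} {F : Matrix (Fin n) (Fin n) ℂ}
    {t : ℝ} (h : HasDerivAt f F t) :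
    HasDerivAt (fun s => (f s)ᴴ) Fᴴ t :=
  (ctCLM).hasFDerivAt.comp_hasDerivAt t h

theorem chol_entry (A R : ℝ → Matrix (Fin n) (Fin n) ℂ)
    (hRt : ∀ t, (R t).BlockTriangular id)
    (hchol : ∀ t, (R t)ᴴ * R t = A t) (t : ℝ) (i j : Fin n) :
    A t i j = (∑ k ∈ Finset.Iio i, (starRingEnd ℂ) (R t k i) * R t k j)
      + (starRingEnd ℂ) (R t i i) * R t i j := by
  rw [← hchol t]
  rw [Matrix.mul_apply]
  have h1 : ∑ k : Fin n, (R t)ᴴ i k * R t k j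
      = ∑ k ∈ Finset.Iic i, (R t)ᴴ i k * R t k j := by
    refine (Finset.sum_subset (Finset.subset_univ _) ?_).symm
    intro k _ hk
    have hik : i < k := by simpa using hk
    have : R t k i = 0 := hRt t (show (id i : Fin n) < id k from hik)
    simp [Matrix.conjTranspose_apply, this]
  rw [h1, ← Finset.Iio_insert, Finset.sum_insert Finset.notMem_Iio_self]
  simp [Matrix.conjTranspose_apply, add_comm]

theorem chol_diff (A R : ℝ → Matrix (Fin n) (Fin n) ℂ)
    (hA : ∀ i j, Differentiable ℝ fun s => A s i j)
    (hRt : ∀ t, (R t).BlockTriangular id)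
    (hRdiag : ∀ t i, ∃ r : ℝ, 0 < r ∧ R t i i = (r : ℂ))
    (hchol : ∀ t, (R t)ᴴ * R t = A t) :
    ∀ i j, Differentiable ℝ fun s => R s i j := by
  have key := chol_entry A R hRt hchol
  have H : ∀ m : ℕ, ∀ i : Fin n, (i : ℕ) = m → ∀ j, Differentiable ℝ fun s => R s i j := by
    intro m
    induction m using Nat.strong_induction_on with
    | _ m IH =>
      rintro i rfl j
      have IH' : ∀ k : Fin n, k < i → ∀ j', Differentiable ℝ fun s => R s k j' :=
        fun k hk j' => IH k.1 hk k rfl j'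
      set g : ℝ → ℝ := fun s => (A s i i).re - ∑ k ∈ Finset.Iio i, Complex.normSq (R s k i)
        with hg
      have hgval : ∀ s, ∀ r : ℝ, 0 < r → R s i i = (r : ℂ) → g s = r ^ 2 := by
        intro s r hr hRe
        have h2 : A s i i = ((∑ k ∈ Finset.Iio i, Complex.normSq (R s k i) : ℝ) : ℂ)
            + ((r ^ 2 : ℝ) : ℂ) := by
          rw [key s i i, hRe]
          push_cast
          congr 1
          · exact Finset.sum_congr rfl fun k _ => by
              rw [Complex.normSq_eq_conj_mul_self]
          · simp [Complex.conj_ofReal]; ring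
        have := congrArg Complex.re h2
        simp only [Complex.add_re, Complex.ofReal_re] at this
        simp [hg, this]
      have hgpos : ∀ s, 0 < g s := by
        intro s
        obtain ⟨r, hr, hRe⟩ := hRdiag s i
        rw [hgval s r hr hRe]; positivity
      have hgdiff : Differentiable ℝ g := by
        apply Differentiable.sub
        · exact Complex.reCLM.differentiable.comp (hA i i)
        · apply Differentiable.fun_sum
          intro k hk
          have hk' := IH' k (Finset.mem_Iio.mp hk) i
          have hre := Complex.reCLM.differentiable.comp hk'
          have him := Complex.imCLM.differentiable.comp hk'
          have : (fun s => Complex.normSq (R s k i))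
              = fun s => (R s k i).re * (R s k i).re + (R s k i).im * (R s k i).im :=
            funext fun s => Complex.normSq_apply _
          rw [this]
          exact (hre.mul hre).add (him.mul him)
      have hdiagEq : ∀ s, R s i i = ((Real.sqrt (g s) : ℝ) : ℂ) := by
        intro s
        obtain ⟨r, hr, hRe⟩ := hRdiag s i
        rw [hRe, hgval s r hr hRe, Real.sqrt_sq hr.le]
      have hdiag : Differentiable ℝ fun s => R s i i := by
        rw [funext hdiagEq]
        exact Complex.ofRealCLM.differentiable.comp fun s =>
          ((Real.hasDerivAt_sqrt (hgpos s).ne').differentiableAt.comp s (hgdiff s))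
      rcases lt_trichotomy j i with hj | hj | hj
      · have : (fun s => R s i j) = fun _ => (0 : ℂ) :=
          funext fun s => hRt s (show (id j : Fin n) < id i from hj)
        rw [this]; exact differentiable_const 0
      · rw [hj]; exact hdiag
      · have hne : ∀ s, R s i i ≠ 0 := by
          intro s
          obtain ⟨r, hr, hRe⟩ := hRdiag s i
          rw [hRe]
          exact_mod_cast hr.ne'
        have hform : ∀ s, R s i j
            = (A s i j - ∑ k ∈ Finset.Iio i, (starRingEnd ℂ) (R s k i) * R s k j) / (R s i i) := by
          intro s
          obtain ⟨r, hr, hRe⟩ := hRdiag s i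
          rw [eq_div_iff (hne s)]
          have hconj : (starRingEnd ℂ) (R s i i) = R s i i := by
            rw [hRe]; exact Complex.conj_ofReal r
          rw [key s i j, hconj]
          ring
        rw [funext hform]
        apply Differentiable.div _ hdiag hne
        apply Differentiable.sub (hA i j)
        apply Differentiable.fun_sum
        intro k hk
        have hk1 := IH' k (Finset.mem_Iio.mp hk) i
        have hk2 := IH' k (Finset.mem_Iio.mp hk) j
        exact ((Complex.conjCLE : ℂ ≃L[ℝ] ℂ).differentiable.comp hk1).mul hk2
  exact fun i j => H i.1 i rfl j

end SymesAux

open SymesAux in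
/-- Symes: let `M` be Hermitian and for each `t` let
`exp(tM) = Q(t) R(t)` be the QR-decomposition (`Q(t)` unitary, `R(t)` upper triangular with
positive real diagonal). Then `M(t) := Q(t)⁻¹ M Q(t)` solves the symmetric Toda lattice
equation `dM/dt = [M(t), k(M(t))]`. -/
theorem stmt17 {n : ℕ} (M : Matrix (Fin n) (Fin n) ℂ) (hM : M.IsHermitian)
    (Q R : ℝ → Matrix (Fin n) (Fin n) ℂ)
    (hQ : ∀ t, Q t ∈ Matrix.unitaryGroup (Fin n) ℂ)
    (hR : ∀ t, (R t).BlockTriangular id)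
    (hRdiag : ∀ t i, ∃ r : ℝ, 0 < r ∧ R t i i = (r : ℂ))
    (hQR : ∀ t : ℝ, NormedSpace.exp ((t : ℂ) • M) = Q t * R t) :
    ∀ (t : ℝ) (i j : Fin n),
      HasDerivAt (fun s : ℝ => ((Q s)⁻¹ * M * Q s) i j)
        ((((Q t)⁻¹ * M * Q t) * kProj ((Q t)⁻¹ * M * Q t) -
          kProj ((Q t)⁻¹ * M * Q t) * ((Q t)⁻¹ * M * Q t)) i j) t := by
  intro t i j
  classical
  set E : ℝ → Matrix (Fin n) (Fin n) ℂ := fun s => NormedSpace.exp ((s : ℂ) • M) with hEdef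
  have hEQR : ∀ s : ℝ, E s = Q s * R s := fun s => hQR s
  have hEexp : ∀ s : ℝ, E s = NormedSpace.exp (s • M) := by
    intro s
    show NormedSpace.exp ((s : ℂ) • M) = _
    have hsm : ((s : ℂ)) • M = s • M := by
      ext a b
      simp [Matrix.smul_apply, Complex.real_smul]
    rw [hsm]
  have hEd : ∀ u : ℝ, HasDerivAt E (M * E u) u := by
    intro u
    have h := hasDerivAt_exp_smul_const' (𝕂 := ℝ) M u
    rw [hEexp u]
    exact h.congr_of_eventuallyEq (Filter.Eventually.of_forall fun s => (hEexp s))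
  set A : ℝ → Matrix (Fin n) (Fin n) ℂ := fun s => (E s)ᴴ * E s with hAdef
  have hEdiff : ∀ k l : Fin n, Differentiable ℝ fun s => E s k l :=
    fun k l u => (hasDerivAt_entry (hEd u) k l).differentiableAt
  have hAdiff : ∀ a b : Fin n, Differentiable ℝ fun s => A s a b := by
    intro a b
    have hfe : (fun s => A s a b)
        = fun s => ∑ k : Fin n, (starRingEnd ℂ) (E s k a) * E s k b := by
      funext s
      simp [hAdef, Matrix.mul_apply, Matrix.conjTranspose_apply]
    rw [hfe]
    exact Differentiable.fun_sum fun k _ =>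
      ((Complex.conjCLE : ℂ ≃L[ℝ] ℂ).differentiable.comp (hEdiff k a)).mul (hEdiff k b)
  have hQunit : ∀ s, (Q s)ᴴ * Q s = 1 := fun s => Matrix.mem_unitaryGroup_iff'.mp (hQ s)
  have hQunit' : ∀ s, Q s * (Q s)ᴴ = 1 := fun s => Matrix.mem_unitaryGroup_iff.mp (hQ s)
  have hchol : ∀ s, (R s)ᴴ * R s = A s := by
    intro s
    show _ = (E s)ᴴ * E s
    rw [hEQR s, conjTranspose_mul, Matrix.mul_assoc (R s)ᴴ, ← Matrix.mul_assoc (Q s)ᴴ,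
      hQunit s, Matrix.one_mul]
  have hRdiff : ∀ a b : Fin n, Differentiable ℝ fun s => R s a b :=
    chol_diff A R hAdiff hR hRdiag hchol
  set R' : Matrix (Fin n) (Fin n) ℂ := Matrix.of fun a b => deriv (fun s => R s a b) t with hR'def
  have hR'e : ∀ a b, HasDerivAt (fun s => R s a b) (R' a b) t :=
    fun a b => (hRdiff a b t).hasDerivAt
  have hRder : HasDerivAt R R' t := hasDerivAt_matrix hR'e
  have hdet : ∀ s, IsUnit (R s).det := by
    intro s
    rw [Matrix.det_of_upperTriangular (hR s)]
    rw [isUnit_iff_ne_zero]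
    rw [Finset.prod_ne_zero_iff]
    intro a _
    obtain ⟨r, hr, hRe⟩ := hRdiag s a
    rw [hRe]
    exact_mod_cast hr.ne'
  have hRRinv : ∀ s, R s * (R s)⁻¹ = 1 := fun s => Matrix.mul_nonsing_inv _ (hdet s)
  have hRinvDer : HasDerivAt (fun s => (R s)⁻¹) (-((R t)⁻¹ * R' * (R t)⁻¹)) t := by
    obtain ⟨u, hu⟩ := (Matrix.isUnit_iff_isUnit_det _).mpr (hdet t)
    have h2 : (↑u⁻¹ : Matrix (Fin n) (Fin n) ℂ) = (R t)⁻¹ := by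
      rw [Matrix.coe_units_inv, hu]
    have h0 : HasFDerivAt Ring.inverse
        (-(ContinuousLinearMap.mulLeftRight ℝ (Matrix (Fin n) (Fin n) ℂ) (↑u⁻¹) (↑u⁻¹))) (R t) := by
      rw [← hu]
      exact hasFDerivAt_ringInverse u
    have h1 : HasDerivAt (fun s => Ring.inverse (R s))
        ((-(ContinuousLinearMap.mulLeftRight ℝ (Matrix (Fin n) (Fin n) ℂ) (↑u⁻¹) (↑u⁻¹))) R') t :=
      h0.comp_hasDerivAt t hRder
    have h3 : HasDerivAt (fun s => (R s)⁻¹)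
        ((-(ContinuousLinearMap.mulLeftRight ℝ _ (↑u⁻¹) (↑u⁻¹))) R') t :=
      h1.congr_of_eventuallyEq (Filter.Eventually.of_forall fun s =>
        (Matrix.nonsing_inv_eq_ringInverse (R s)))
    have h4 : ((-(ContinuousLinearMap.mulLeftRight ℝ _ (↑u⁻¹) (↑u⁻¹)))
        (R' : Matrix (Fin n) (Fin n) ℂ)) = -((R t)⁻¹ * R' * (R t)⁻¹) := by
      simp [ContinuousLinearMap.mulLeftRight_apply, h2, Matrix.mul_assoc]
    rw [← h4]
    exact h3
  have hQeq : ∀ s, Q s = E s * (R s)⁻¹ := by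
    intro s
    rw [hEQR s, Matrix.mul_assoc, hRRinv s, Matrix.mul_one]
  set Q' : Matrix (Fin n) (Fin n) ℂ :=
    M * E t * (R t)⁻¹ + E t * -((R t)⁻¹ * R' * (R t)⁻¹) with hQ'def
  have hQder : HasDerivAt Q Q' t :=
    (((hEd t).mul hRinvDer)).congr_of_eventuallyEq (Filter.Eventually.of_forall hQeq)
  have hQct : HasDerivAt (fun s => (Q s)ᴴ) Q'ᴴ t := SymesAux.HasDerivAt.matrixCT hQder
  set S : Matrix (Fin n) (Fin n) ℂ := (Q t)ᴴ * Q' with hSdef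
  have hskew : Q'ᴴ * Q t + (Q t)ᴴ * Q' = 0 := by
    have h1 : HasDerivAt (fun s => (Q s)ᴴ * Q s) (Q'ᴴ * Q t + (Q t)ᴴ * Q') t := hQct.mul hQder
    have h2 : HasDerivAt (fun s => (Q s)ᴴ * Q s) 0 t := by
      have hconst : (fun s => (Q s)ᴴ * Q s) = fun _ => (1 : Matrix (Fin n) (Fin n) ℂ) :=
        funext hQunit
      rw [hconst]
      exact hasDerivAt_const t 1
    exact h1.unique h2
  have hSct : Sᴴ = -S := by
    rw [hSdef, conjTranspose_mul, conjTranspose_conjTranspose]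
    exact eq_neg_of_add_eq_zero_left hskew
  have hprod : M * E t = Q' * R t + Q t * R' := by
    have h1 : HasDerivAt (fun s => Q s * R s) (Q' * R t + Q t * R') t := hQder.mul hRder
    have h2 : HasDerivAt (fun s => Q s * R s) (M * E t) t :=
      (hEd t).congr_of_eventuallyEq (Filter.Eventually.of_forall fun s => (hEQR s).symm)
    exact h2.unique h1
  set N : Matrix (Fin n) (Fin n) ℂ := (Q t)ᴴ * M * Q t with hNdef
  set U : Matrix (Fin n) (Fin n) ℂ := R' * (R t)⁻¹ with hUdef
  have hNSU : N = S + U := by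
    have h3 : (Q t)ᴴ * (M * E t) * (R t)⁻¹ = S + U := by
      rw [hprod]
      calc (Q t)ᴴ * (Q' * R t + Q t * R') * (R t)⁻¹
          = (Q t)ᴴ * Q' * (R t * (R t)⁻¹) + ((Q t)ᴴ * Q t) * (R' * (R t)⁻¹) := by
            noncomm_ring
        _ = S + U := by rw [hRRinv t, hQunit t, Matrix.mul_one, Matrix.one_mul]
    rw [← h3, hEQR t]
    calc (Q t)ᴴ * M * Q t
        = (Q t)ᴴ * M * Q t * (R t * (R t)⁻¹) := by rw [hRRinv t, Matrix.mul_one]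
      _ = (Q t)ᴴ * (M * (Q t * R t)) * (R t)⁻¹ := by noncomm_ring
  have hR'low : ∀ a b : Fin n, b < a → R' a b = 0 := by
    intro a b hba
    have h2 : HasDerivAt (fun s => R s a b) 0 t := by
      have hconst : (fun s => R s a b) = fun _ => (0 : ℂ) :=
        funext fun s => hR s (show (id b : Fin n) < id a from hba)
      rw [hconst]
      exact hasDerivAt_const t 0
    exact (hR'e a b).unique h2
  have hR'tri : (R' : Matrix (Fin n) (Fin n) ℂ).BlockTriangular id := fun a b h => hR'low a b h
  letI : Invertible (R t) := (R t).invertibleOfIsUnitDet (hdet t)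
  have hRinvTri : ((R t)⁻¹).BlockTriangular id :=
    Matrix.blockTriangular_inv_of_blockTriangular (hR t)
  have hUtri : U.BlockTriangular id := hR'tri.mul hRinvTri
  have hR'diagIm : ∀ a : Fin n, (R' a a).im = 0 := by
    intro a
    have h1 : HasDerivAt (fun s => (R s a a).im) ((R' a a).im) t :=
      Complex.imCLM.hasFDerivAt.comp_hasDerivAt t (hR'e a a)
    have h2 : HasDerivAt (fun s => (R s a a).im) 0 t := by
      have hconst : (fun s => (R s a a).im) = fun _ => (0 : ℝ) := by
        funext s
        obtain ⟨r, hr, hRe⟩ := hRdiag s a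
        rw [hRe]
        simp
      rw [hconst]
      exact hasDerivAt_const t 0
    exact h1.unique h2
  have hRinvDiag : ∀ a : Fin n, ((R t)⁻¹ a a).im = 0 := by
    intro a
    have h1 : (R t * (R t)⁻¹) a a = 1 := by rw [hRRinv t]; simp
    rw [Matrix.mul_apply] at h1
    rw [Finset.sum_eq_single a] at h1
    · obtain ⟨r, hr, hRe⟩ := hRdiag t a
      rw [hRe] at h1
      have h2 : (R t)⁻¹ a a = ((r : ℂ))⁻¹ := eq_inv_of_mul_eq_one_right h1
      rw [h2, ← Complex.ofReal_inv]
      simp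
    · intro k _ hk
      rcases lt_or_gt_of_ne hk with hlt | hgt
      · have : R t a k = 0 := hR t (show (id k : Fin n) < id a from hlt)
        rw [this, zero_mul]
      · have : (R t)⁻¹ k a = 0 := hRinvTri (show (id a : Fin n) < id k from hgt)
        rw [this, mul_zero]
    · intro h; exact absurd (Finset.mem_univ a) h
  have hUdiagIm : ∀ a : Fin n, (U a a).im = 0 := by
    intro a
    have h1 : U a a = R' a a * (R t)⁻¹ a a := by
      rw [hUdef, Matrix.mul_apply]
      rw [Finset.sum_eq_single a]
      · intro k _ hk
        rcases lt_or_gt_of_ne hk with hlt | hgt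
        · have : R' a k = 0 := hR'low a k hlt
          rw [this, zero_mul]
        · have : (R t)⁻¹ k a = 0 := hRinvTri (show (id a : Fin n) < id k from hgt)
          rw [this, mul_zero]
      · intro h; exact absurd (Finset.mem_univ a) h
    rw [h1, Complex.mul_im, hR'diagIm a, hRinvDiag a]
    ring
  have hkS : kProj N = S := by
    ext a b
    simp only [kProj, Matrix.of_apply]
    rcases lt_trichotomy a b with h | h | h
    · rw [if_neg (asymm h), if_pos h]
      have hU : U b a = 0 := hUtri (show (id a : Fin n) < id b from h)
      have hNba : N b a = S b a := by rw [hNSU]; simp [Matrix.add_apply, hU]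
      rw [hNba]
      have hc := congrFun (congrFun hSct a) b
      rw [Matrix.conjTranspose_apply] at hc
      rw [show (starRingEnd ℂ) (S b a) = star (S b a) from rfl, hc]
      simp
    · subst h
      rw [if_neg (lt_irrefl a), if_neg (lt_irrefl a)]
      have hNaa : (N a a).im = (S a a).im := by
        rw [hNSU]; simp [Matrix.add_apply, hUdiagIm a]
      rw [hNaa]
      have hc := congrFun (congrFun hSct a) a
      rw [Matrix.conjTranspose_apply] at hc
      have hre : (S a a).re = 0 := by
        have := congrArg Complex.re hc
        simp only [Complex.star_def, Complex.conj_re, Matrix.neg_apply, Complex.neg_re] at this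
        linarith
      apply Complex.ext
      · simp [Complex.mul_re, hre]
      · simp [Complex.mul_im, hre]
    · rw [if_pos h]
      have hU : U a b = 0 := hUtri (show (id b : Fin n) < id a from h)
      rw [hNSU]
      simp [Matrix.add_apply, hU]
  have hQS : Q' = Q t * S := by
    rw [hSdef, ← Matrix.mul_assoc, hQunit' t, Matrix.one_mul]
  have hNder : HasDerivAt (fun s => (Q s)ᴴ * M * Q s) (Q'ᴴ * M * Q t + (Q t)ᴴ * M * Q') t :=
    (hQct.mul_const M).mul hQder
  have hval : Q'ᴴ * M * Q t + (Q t)ᴴ * M * Q' = N * kProj N - kProj N * N := by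
    rw [hkS, hQS, conjTranspose_mul, hSct, hNdef]
    noncomm_ring
  rw [hval] at hNder
  have hQinv : ∀ s, (Q s)⁻¹ = (Q s)ᴴ := fun s => Matrix.inv_eq_left_inv (hQunit s)
  have hfun : ∀ s, (Q s)⁻¹ * M * Q s = (Q s)ᴴ * M * Q s := fun s => by rw [hQinv s]
  have hfinal : HasDerivAt (fun s => ((Q s)⁻¹ * M * Q s)) (N * kProj N - kProj N * N) t :=
    hNder.congr_of_eventuallyEq (Filter.Eventually.of_forall hfun)
  have hentry := hasDerivAt_entry hfinal i j
  have hNQ : (Q t)⁻¹ * M * Q t = N := by rw [hQinv t, hNdef]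
  rw [hNQ]
  exact hentry
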